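/- Let F be a finite group, H ≤ Z(F) a central subgroup, and γ: H → U(E) a finite-dimensional unitary representation. Then for every g ∈ F \ H, ‖Ind_H^F γ(g) − 1‖ ≥ √2. -/

import Mathlib

variable {F : Type*} [Group F] [Fintype F]
variable {E : Type*} [NormedAddCommGroup E] [InnerProductSpace ℂ E] [FiniteDimensional ℂ E]

/-- The space of the representation of `F` induced from a representation `γ` of a
subgroup `H`: functions `ξ : F → E` with `ξ(xh) = γ(h⁻¹)(ξ(x))`, viewed as a subspace of
the Hilbert space `⨁_{x ∈ F} E` (with its `ℓ²` inner product). -/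
def indSpace (H : Subgroup F) (γ : H →* (E →L[ℂ] E)) :
    Submodule ℂ (PiLp 2 fun _ : F => E) where
  carrier := {ξ | ∀ (x : F) (h : H), ξ (x * (h : F)) = γ h⁻¹ (ξ x)}
  zero_mem' := fun x h => (map_zero (γ h⁻¹)).symm
  add_mem' := fun {ξ η} hξ hη x h => by
    show ξ (x * (h : F)) + η (x * (h : F)) = γ h⁻¹ (ξ x + η x)
    rw [hξ x h, hη x h, map_add]
  smul_mem' := fun c ξ hξ x h => by
    show c • ξ (x * (h : F)) = γ h⁻¹ (c • ξ x)
    rw [hξ x h, map_smul]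

/-- The representation of `F` induced from the representation `γ` of the subgroup `H`:
`(Ind γ (g) ξ)(x) = ξ(g⁻¹ x)`. -/
noncomputable def indRep (H : Subgroup F) (γ : H →* (E →L[ℂ] E)) (g : F) :
    indSpace H γ →L[ℂ] indSpace H γ :=
  LinearMap.toContinuousLinearMap
    { toFun := fun ξ => ⟨WithLp.toLp 2 (fun x => ξ.1 (g⁻¹ * x)), fun x h => by
        show ξ.1 (g⁻¹ * (x * (h : F))) = γ h⁻¹ (ξ.1 (g⁻¹ * x))
        rw [← mul_assoc]
        exact ξ.2 (g⁻¹ * x) h⟩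
      map_add' := fun ξ η => rfl
      map_smul' := fun c ξ => rfl }

/-- Let `F` be a finite group, `H ≤ Z(F)` a central subgroup, and
`γ : H → U(E)` a (nonzero) finite-dimensional unitary representation.  Then for every
`g ∈ F \ H`, `‖Ind_H^F γ(g) − 1‖ ≥ √2`. -/
theorem indRep_norm_sub_one_ge_sqrt_two
    [Nontrivial E] (H : Subgroup F) (hH : H ≤ Subgroup.center F)
    (γ : H →* (E →L[ℂ] E)) (hγ : ∀ h, γ h ∈ unitary (E →L[ℂ] E))
    (g : F) (hg : g ∉ H) :
    Real.sqrt 2 ≤ ‖indRep H γ g - 1‖ := by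
  classical
  obtain ⟨v, hv⟩ := exists_ne (0 : E)
  set ξf : PiLp 2 fun _ : F => E :=
    WithLp.toLp 2 (fun x => if hx : x ∈ H then γ (⟨x, hx⟩ : H)⁻¹ v else 0) with hξf
  have hmem : ξf ∈ indSpace H γ := by
    intro x h
    by_cases hx : x ∈ H
    · have hxh : x * (h : F) ∈ H := H.mul_mem hx h.2
      have : (⟨x * (h : F), hxh⟩ : H) = ⟨x, hx⟩ * h := rfl
      simp only [hξf, PiLp.toLp_apply, dif_pos hx, dif_pos hxh, this, mul_inv_rev, map_mul]
      rfl
    · have hxh : x * (h : F) ∉ H := by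
        intro hm
        exact hx (by simpa using H.mul_mem hm (H.inv_mem h.2))
      simp [hξf, dif_neg hx, dif_neg hxh]
  set ξ : indSpace H γ := ⟨ξf, hmem⟩ with hξ
  have hnorm : ∀ x : F, ‖ξf x‖ = if x ∈ H then ‖v‖ else 0 := by
    intro x
    by_cases hx : x ∈ H
    · simp only [hξf, PiLp.toLp_apply, dif_pos hx, if_pos hx]
      exact ContinuousLinearMap.norm_map_of_mem_unitary (hγ _) v
    · simp [hξf, dif_neg hx, if_neg hx]
  have hvpos : (0 : ℝ) < ‖v‖ := norm_pos_iff.mpr hv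
  have hξnormsq : ‖ξ‖ ^ 2 = (Nat.card H : ℝ) * ‖v‖ ^ 2 := by
    have hc : ‖ξ‖ = ‖ξf‖ := rfl
    rw [hc, PiLp.norm_sq_eq_of_L2]
    have hpt : ∀ x : F, ‖ξf x‖ ^ 2 = if x ∈ H then ‖v‖ ^ 2 else 0 := by
      intro x; rw [hnorm x]; split <;> simp
    simp_rw [hpt]
    rw [Finset.sum_ite, Finset.sum_const_zero, add_zero, Finset.sum_const,
      nsmul_eq_mul]
    congr 2
    rw [Nat.card_eq_fintype_card, Fintype.card_subtype]
  have hξpos : (0 : ℝ) < ‖ξ‖ := by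
    have h1 : (0:ℝ) < (Nat.card H : ℝ) * ‖v‖ ^ 2 := by
      have : 0 < Nat.card H := Nat.card_pos
      positivity
    nlinarith [norm_nonneg ξ]
  have happly : ∀ x : F, (((indRep H γ g - 1) ξ : indSpace H γ) : PiLp 2 fun _ : F => E) x
      = ξf (g⁻¹ * x) - ξf x := by
    intro x; rfl
  have hdisj : ∀ x : F, ‖ξf (g⁻¹ * x) - ξf x‖ ^ 2 = ‖ξf (g⁻¹ * x)‖ ^ 2 + ‖ξf x‖ ^ 2 := by
    intro x
    by_cases hx : x ∈ H
    · have h2 : g⁻¹ * x ∉ H := by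
        intro hm
        exact hg (by simpa using H.inv_mem (H.mul_mem hm (H.inv_mem hx)))
      have hz : ξf (g⁻¹ * x) = 0 := by simp [hξf, dif_neg h2]
      rw [hz]; simp
    · have hz : ξf x = 0 := by simp [hξf, dif_neg hx]
      rw [hz]; simp
  have hUnormsq : ‖(indRep H γ g - 1) ξ‖ ^ 2 = 2 * ‖ξ‖ ^ 2 := by
    have hc : ‖(indRep H γ g - 1) ξ‖
        = ‖(((indRep H γ g - 1) ξ : indSpace H γ) : PiLp 2 fun _ : F => E)‖ := rfl
    rw [hc, PiLp.norm_sq_eq_of_L2]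
    simp_rw [happly, hdisj]
    rw [Finset.sum_add_distrib]
    have hshift : ∑ x : F, ‖ξf (g⁻¹ * x)‖ ^ 2 = ∑ x : F, ‖ξf x‖ ^ 2 :=
      Fintype.sum_equiv (Equiv.mulLeft g⁻¹) _ _ (fun x => rfl)
    have hc2 : ‖ξ‖ = ‖ξf‖ := rfl
    rw [hshift, hc2, PiLp.norm_sq_eq_of_L2]; ring
  have hUnorm : ‖(indRep H γ g - 1) ξ‖ = Real.sqrt 2 * ‖ξ‖ := by
    have h2 : (0:ℝ) ≤ 2 := by norm_num
    nlinarith [norm_nonneg ((indRep H γ g - 1) ξ), Real.sq_sqrt h2,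
      Real.sqrt_nonneg 2, norm_nonneg ξ,
      mul_nonneg (Real.sqrt_nonneg 2) (norm_nonneg ξ)]
  have hle := (indRep H γ g - 1).le_opNorm ξ
  rw [hUnorm] at hle
  exact le_of_mul_le_mul_right (by linarith) hξpos
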